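/- Let i,j,k be nonnegative integers with i ≥ j and i ≥ k. The number of shortest 26-neighbor paths in Z^3 from (0,0,0) to (i,j,k) equals (Σ_{b≥0, 2b≤i−j} i!/(b!·(j+b)!·(i−j−2b)!)) × (Σ_{a≥0, 2a≤i−k} i!/(a!·(k+a)!·(i−k−2a)!)). -/

import Mathlib

/-- Two points of `ℤ³` are 26-neighbors: distinct and each coordinate differs by at most 1. -/
def Adj26 (p q : ℤ × ℤ × ℤ) : Prop :=
  p ≠ q ∧ (p.1 - q.1).natAbs ≤ 1 ∧ (p.2.1 - q.2.1).natAbs ≤ 1 ∧ (p.2.2 - q.2.2).natAbs ≤ 1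

/-- `f` is a 26-neighbor path of length `n` from `p` to `q`. -/
def IsPath26 (n : ℕ) (f : Fin (n + 1) → ℤ × ℤ × ℤ) (p q : ℤ × ℤ × ℤ) : Prop :=
  f 0 = p ∧ f (Fin.last n) = q ∧ ∀ t : Fin n, Adj26 (f t.castSucc) (f t.succ)

open Finset

/-! ### Auxiliary lemmas -/

lemma tele26 {n : ℕ} (g : Fin (n+1) → ℤ) :
    ∑ t : Fin n, (g t.succ - g t.castSucc) = g (Fin.last n) - g 0 := by
  induction n with
  | zero => simp
  | succ n ih =>
    rw [Fin.sum_univ_castSucc]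
    have h := ih (g ∘ Fin.castSucc)
    simp only [Function.comp, Fin.succ_castSucc] at h ⊢
    rw [h]
    simp [Fin.succ_last]

/-- Partial sums of a step sequence. -/
def psum26 {n : ℕ} (s : Fin n → ℤ) (t : Fin (n+1)) : ℤ :=
  ∑ u ∈ Finset.range t.val, (if h : u < n then s ⟨u, h⟩ else 0)

lemma psum26_zero {n : ℕ} (s : Fin n → ℤ) : psum26 s 0 = 0 := by simp [psum26]

lemma psum26_last {n : ℕ} (s : Fin n → ℤ) : psum26 s (Fin.last n) = ∑ t, s t := by
  rw [psum26, Fin.val_last, ← Fin.sum_univ_eq_sum_range]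
  simp

lemma psum26_step {n : ℕ} (s : Fin n → ℤ) (t : Fin n) :
    psum26 s t.succ - psum26 s t.castSucc = s t := by
  simp [psum26, Fin.val_succ, Finset.sum_range_succ, t.isLt]

/-- In a shortest path, every step increases the `x`-coordinate by `1`. -/
lemma xstep26 {n : ℕ} {f : Fin (n+1) → ℤ × ℤ × ℤ} {y z : ℤ}
    (hf : IsPath26 n f (0,0,0) ((n : ℤ), y, z)) (t : Fin n) :
    (f t.succ).1 - (f t.castSucc).1 = 1 := by
  obtain ⟨h0, hl, hadj⟩ := hf
  have hsum : ∑ u : Fin n, ((f u.succ).1 - (f u.castSucc).1) = n := by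
    rw [tele26 (fun u => (f u).1), h0, hl]
    simp
  have hle : ∀ u : Fin n, (f u.succ).1 - (f u.castSucc).1 ≤ 1 := by
    intro u
    have := (hadj u).2.1
    omega
  have hz : ∑ u : Fin n, (1 - ((f u.succ).1 - (f u.castSucc).1)) = 0 := by
    rw [Finset.sum_sub_distrib, hsum]
    simp [Finset.card_univ]
  have := (Finset.sum_eq_zero_iff_of_nonneg (fun u _ => by
    have := hle u; omega : ∀ u ∈ Finset.univ,
      (0:ℤ) ≤ 1 - ((f u.succ).1 - (f u.castSucc).1))).mp hz t (Finset.mem_univ t)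
  omega

/-- A shortest path is determined by its `y`- and `z`-increments. -/
lemma path_eq26 {n : ℕ} {f : Fin (n+1) → ℤ × ℤ × ℤ} {yv zv : ℤ}
    (hf : IsPath26 n f (0,0,0) ((n : ℤ), yv, zv)) (t : Fin (n+1)) :
    f t = ((t.val : ℤ), psum26 (fun u => (f u.succ).2.1 - (f u.castSucc).2.1) t,
      psum26 (fun u => (f u.succ).2.2 - (f u.castSucc).2.2) t) := by
  induction t using Fin.induction with
  | zero => simp [hf.1, psum26]
  | succ t ih =>
    have hx := xstep26 hf t
    have hy := psum26_step (fun u => (f u.succ).2.1 - (f u.castSucc).2.1) t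
    have hz := psum26_step (fun u => (f u.succ).2.2 - (f u.castSucc).2.2) t
    have i1 : (f t.castSucc).1 = ((t : ℕ) : ℤ) := by rw [ih]; simp
    have i2 : (f t.castSucc).2.1
        = psum26 (fun u => (f u.succ).2.1 - (f u.castSucc).2.1) t.castSucc := by rw [ih]
    have i3 : (f t.castSucc).2.2
        = psum26 (fun u => (f u.succ).2.2 - (f u.castSucc).2.2) t.castSucc := by rw [ih]
    rw [Prod.ext_iff, Prod.ext_iff]
    refine ⟨?_, ?_, ?_⟩ <;> simp only [Fin.val_succ] <;> push_cast <;> omega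

/-- Shortest paths correspond to pairs of step sequences in `{-1,0,1}` with given sums. -/
def pathEquiv26 (n : ℕ) (jz kz : ℤ) :
    {f : Fin (n+1) → ℤ × ℤ × ℤ // IsPath26 n f (0,0,0) ((n:ℤ), jz, kz)} ≃
      ({y : Fin n → ℤ // (∀ t, (y t).natAbs ≤ 1) ∧ ∑ t, y t = jz} ×
       {z : Fin n → ℤ // (∀ t, (z t).natAbs ≤ 1) ∧ ∑ t, z t = kz}) where
  toFun f :=
    (⟨fun t => (f.1 t.succ).2.1 - (f.1 t.castSucc).2.1,
      fun t => by have := (f.2.2.2 t).2.2.1; simp only; omega,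
      by
        rw [tele26 (fun u => (f.1 u).2.1), f.2.1, f.2.2.1]
        simp⟩,
     ⟨fun t => (f.1 t.succ).2.2 - (f.1 t.castSucc).2.2,
      fun t => by have := (f.2.2.2 t).2.2.2; simp only; omega,
      by
        rw [tele26 (fun u => (f.1 u).2.2), f.2.1, f.2.2.1]
        simp⟩)
  invFun p :=
    ⟨fun t => ((t.val : ℤ), psum26 p.1.1 t, psum26 p.2.1 t), by
      refine ⟨by simp [psum26_zero], by simp [psum26_last, p.1.2.2, p.2.2.2], fun t => ?_⟩
      have hy := psum26_step p.1.1 t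
      have hz := psum26_step p.2.1 t
      have hby := p.1.2.1 t
      have hbz := p.2.2.1 t
      refine ⟨?_, ?_, ?_, ?_⟩
      · intro hcon
        rw [Prod.ext_iff] at hcon
        have := hcon.1
        simp only [Fin.coe_castSucc, Fin.val_succ] at this
        omega
      · simp only [Fin.coe_castSucc, Fin.val_succ]
        push_cast
        omega
      · simp only
        omega
      · simp only
        omega⟩
  left_inv f := by
    apply Subtype.ext
    funext t
    exact (path_eq26 f.2 t).symm
  right_inv p := by
    rw [Prod.ext_iff]
    constructor <;> apply Subtype.ext <;> funext t <;> simp only <;>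
      [exact psum26_step p.1.1 t; exact psum26_step p.2.1 t]

lemma sum_eq_card26 {n : ℕ} (s : Fin n → ℤ) (h : ∀ t, (s t).natAbs ≤ 1) :
    ∑ t, s t = ((univ.filter (fun t => s t = 1)).card : ℤ)
      - ((univ.filter (fun t => s t = -1)).card : ℤ) := by
  have : ∀ t ∈ univ, s t = (if s t = 1 then (1:ℤ) else 0) - (if s t = -1 then (1:ℤ) else 0) := by
    intro t _
    have := h t
    have h3 : s t = -1 ∨ s t = 0 ∨ s t = 1 := by omega
    rcases h3 with h3 | h3 | h3 <;> simp [h3]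
  rw [Finset.sum_congr rfl this, Finset.sum_sub_distrib, Finset.sum_boole, Finset.sum_boole]

def stepOf26 {n : ℕ} (S T : Finset (Fin n)) : Fin n → ℤ :=
  fun t => if t ∈ T then 1 else if t ∈ S then -1 else 0

lemma filtT26 {n : ℕ} (S T : Finset (Fin n)) :
    univ.filter (fun t => stepOf26 S T t = 1) = T := by
  ext t
  by_cases h1 : t ∈ T <;> by_cases h2 : t ∈ S <;> simp [stepOf26, h1, h2]

lemma filtS26 {n : ℕ} {S T : Finset (Fin n)} (h : Disjoint S T) :
    univ.filter (fun t => stepOf26 S T t = -1) = S := by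
  ext t
  rw [Finset.mem_filter]
  by_cases h1 : t ∈ T <;> by_cases h2 : t ∈ S <;>
    simp [stepOf26, h1, h2]
  exact (Finset.disjoint_left.mp h h2 h1).elim

lemma stepOf26_bound {n : ℕ} (S T : Finset (Fin n)) (t : Fin n) :
    (stepOf26 S T t).natAbs ≤ 1 := by
  unfold stepOf26
  by_cases h1 : t ∈ T <;> by_cases h2 : t ∈ S <;> simp [h1, h2]

/-- Step sequences correspond to pairs of disjoint subsets (positions of `-1`s and `1`s). -/
def seqEquiv26 (n jn : ℕ) :
    {s : Fin n → ℤ // (∀ t, (s t).natAbs ≤ 1) ∧ ∑ t, s t = (jn:ℤ)} ≃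
    {p : Finset (Fin n) × Finset (Fin n) // Disjoint p.1 p.2 ∧ p.2.card = p.1.card + jn} where
  toFun s := ⟨(univ.filter (fun t => s.1 t = -1), univ.filter (fun t => s.1 t = 1)), by
    obtain ⟨s, hb, hsum⟩ := s
    constructor
    · dsimp only
      rw [Finset.disjoint_left]
      intro t ht ht'
      simp at ht ht'
      omega
    · rw [sum_eq_card26 s hb] at hsum
      dsimp only
      omega⟩
  invFun p := ⟨stepOf26 p.1.1 p.1.2, by
    obtain ⟨⟨S, T⟩, hd, hc⟩ := p
    refine ⟨stepOf26_bound S T, ?_⟩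
    rw [sum_eq_card26 _ (stepOf26_bound S T), filtT26, filtS26 hd]
    simp at hc ⊢
    omega⟩
  left_inv s := by
    obtain ⟨s, hb, hsum⟩ := s
    apply Subtype.ext
    funext t
    have := hb t
    have h3 : s t = -1 ∨ s t = 0 ∨ s t = 1 := by omega
    rcases h3 with h3 | h3 | h3 <;> simp [stepOf26, h3]
  right_inv p := by
    obtain ⟨⟨S, T⟩, hd, hc⟩ := p
    apply Subtype.ext
    simp only
    rw [Prod.ext_iff]
    exact ⟨filtS26 hd, filtT26 S T⟩

lemma pairs_count26 (n jn : ℕ) :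
    Nat.card {p : Finset (Fin n) × Finset (Fin n) //
        Disjoint p.1 p.2 ∧ p.2.card = p.1.card + jn} =
      ∑ b ∈ range (n+1), n.choose b * (n-b).choose (jn+b) := by
  rw [Nat.card_eq_fintype_card, Fintype.card_subtype]
  rw [Finset.card_eq_sum_card_fiberwise
    (f := fun p : Finset (Fin n) × Finset (Fin n) => p.1.card) (t := range (n+1))
    (fun p _ => by
      simp only [Finset.mem_coe, Finset.mem_range]
      exact lt_of_le_of_lt (le_trans (Finset.card_le_univ p.1) (by simp)) (Nat.lt_succ_self n))]
  refine Finset.sum_congr rfl fun b hb => ?_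
  have key : ((univ.filter fun p : Finset (Fin n) × Finset (Fin n) =>
        Disjoint p.1 p.2 ∧ p.2.card = p.1.card + jn).filter fun p => p.1.card = b) =
      (univ.powersetCard b).biUnion (fun S => ((Sᶜ.powersetCard (jn+b)).map
        ⟨fun T => (S,T), fun a b h => ((Prod.mk.injEq _ _ _ _).mp h).2⟩)) := by
    ext ⟨S, T⟩
    simp only [Finset.mem_filter, Finset.mem_univ, true_and, Finset.mem_biUnion,
      Finset.mem_powersetCard, Finset.mem_map, Function.Embedding.coeFn_mk, Prod.mk.injEq]
    constructor
    · rintro ⟨⟨hd, hc⟩, hcb⟩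
      refine ⟨S, ⟨Finset.subset_univ S, hcb⟩, T, ⟨?_, by omega⟩, rfl⟩
      exact le_compl_iff_disjoint_left.mpr hd
    · rintro ⟨S', ⟨-, hS'⟩, T', ⟨hsub, hT'⟩, rfl, rfl⟩
      exact ⟨⟨le_compl_iff_disjoint_left.mp hsub, by omega⟩, hS'⟩
  rw [key, Finset.card_biUnion]
  · simp only [Finset.card_map, Finset.card_powersetCard, Finset.card_compl, Fintype.card_fin]
    refine Eq.trans (Finset.sum_congr rfl
      (g := fun _ => (n-b).choose (jn+b)) fun S hS => ?_) ?_
    · rw [(Finset.mem_powersetCard.mp hS).2]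
    rw [Finset.sum_const, Finset.card_powersetCard, card_univ, Fintype.card_fin, smul_eq_mul]
  · intro S hS S' hS' hne
    simp only [Finset.disjoint_left, Finset.mem_map, Function.Embedding.coeFn_mk]
    rintro ⟨a, b'⟩ ⟨T, hT, h1⟩ ⟨T', hT', h2⟩
    exact hne ((((Prod.mk.injEq _ _ _ _).mp h1).1).trans (((Prod.mk.injEq _ _ _ _).mp h2).1).symm)

lemma formula26 (n jn : ℕ) (hj : jn ≤ n) :
    (∑ b ∈ range (n+1), if 2*b ≤ n - jn then
        n.factorial / (b.factorial * (jn+b).factorial * (n - jn - 2*b).factorial) else 0)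
      = ∑ b ∈ range (n+1), n.choose b * (n-b).choose (jn+b) := by
  refine Finset.sum_congr rfl fun b hb => ?_
  simp only [Finset.mem_range] at hb
  by_cases h : 2*b ≤ n - jn
  · rw [if_pos h]
    have hb1 : b ≤ n := by omega
    have hb2 : jn + b ≤ n - b := by omega
    have e1 : b.factorial * (n-b).factorial * n.choose b = n.factorial := by
      rw [← Nat.choose_mul_factorial_mul_factorial hb1]; ring
    have e2 : (jn+b).factorial * (n - b - (jn+b)).factorial * (n-b).choose (jn+b)
        = (n-b).factorial := by
      rw [← Nat.choose_mul_factorial_mul_factorial hb2]; ring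
    have e3 : n - b - (jn + b) = n - jn - 2*b := by omega
    rw [e3] at e2
    refine Nat.div_eq_of_eq_mul_left ?_ ?_
    · positivity
    · rw [← e1, ← e2]; ring
  · rw [if_neg h]
    have : n - b < jn + b := by omega
    rw [Nat.choose_eq_zero_of_lt this, mul_zero]

lemma seq_count26 (n jn : ℕ) (hj : jn ≤ n) :
    Nat.card {s : Fin n → ℤ // (∀ t, (s t).natAbs ≤ 1) ∧ ∑ t, s t = (jn:ℤ)} =
      ∑ b ∈ range (n+1), if 2*b ≤ n - jn then
        n.factorial / (b.factorial * (jn+b).factorial * (n - jn - 2*b).factorial) else 0 := by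
  rw [Nat.card_congr (seqEquiv26 n jn), pairs_count26, formula26 n jn hj]

/-- For `i ≥ j`, `i ≥ k` (nonnegative), the number of shortest 26-neighbor paths from the
origin to `(i,j,k)` equals the product of the two explicit 8-neighborhood sums. -/
theorem count_shortest_paths_26N_explicit (i j k : ℕ) (hj : j ≤ i) (hk : k ≤ i) :
    Nat.card {f : Fin (i + 1) → ℤ × ℤ × ℤ //
        IsPath26 i f (0, 0, 0) ((i : ℤ), (j : ℤ), (k : ℤ))} =
      (∑ b ∈ Finset.range (i + 1),
          if 2 * b ≤ i - j then
            Nat.factorial i /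
              (Nat.factorial b * Nat.factorial (j + b) * Nat.factorial (i - j - 2 * b))
          else 0) *
        ∑ a ∈ Finset.range (i + 1),
          if 2 * a ≤ i - k then
            Nat.factorial i /
              (Nat.factorial a * Nat.factorial (k + a) * Nat.factorial (i - k - 2 * a))
          else 0 := by
  rw [Nat.card_congr (pathEquiv26 i (j:ℤ) (k:ℤ)), Nat.card_prod,
    seq_count26 i j hj, seq_count26 i k hk]
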